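/- Let Y ∈ {0,1}^{n×n} be any matrix satisfying Y_{ji} = 1 − Y_{ij} for all i ≠ j. Then there exists a matrix M̃ ∈ C_SST such that ‖Y − (1/2)·11ᵀ‖²_F = ‖Y − M̃‖²_F + ‖(1/2)·11ᵀ − M̃‖²_F and ‖M̃ − (1/2)·11ᵀ‖²_F ≥ (n − 1)/4. -/

import Mathlib

open MeasureTheory ENNReal

noncomputable section

namespace SSTPaper

/-- Squared Frobenius norm of an `n × n` real matrix (as a function). -/
def frobSq {n : ℕ} (A : Fin n → Fin n → ℝ) : ℝ := ∑ i, ∑ j, (A i j) ^ 2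

/-- Trace inner product `⟨A, B⟩ = trace (Aᵀ B)`. -/
def tinner {n : ℕ} (A B : Fin n → Fin n → ℝ) : ℝ := ∑ i, ∑ j, A i j * B i j

/-- The SST class: shifted-skew-symmetric matrices with entries in `[0,1]` that are
`π`-SST for some permutation `π` (where `π` ranks `i` above `j` iff `π j < π i`). -/
def sstClass (n : ℕ) : Set (Fin n → Fin n → ℝ) :=
  {M | (∀ i j, 0 ≤ M i j ∧ M i j ≤ 1) ∧ (∀ i j, M j i = 1 - M i j) ∧
    ∃ π : Equiv.Perm (Fin n), ∀ i j k : Fin n, π j < π i → M j k ≤ M i k}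

/-- The set of SST matrices faithful to a given permutation `π`. -/
def sstOf {n : ℕ} (π : Equiv.Perm (Fin n)) : Set (Fin n → Fin n → ℝ) :=
  {M | (∀ i j, 0 ≤ M i j ∧ M i j ≤ 1) ∧ (∀ i j, M j i = 1 - M i j) ∧
    ∀ i j k : Fin n, π j < π i → M j k ≤ M i k}

/-- Size of the largest indifference set of `M`: the maximal number of identical rows. -/
def kmaxM {n : ℕ} (M : Fin n → Fin n → ℝ) : ℕ :=
  Finset.univ.sup fun i => Set.ncard {j : Fin n | M j = M i}

/-- Number of indifference sets of `M`: the number of distinct rows. -/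
def numSets {n : ℕ} (M : Fin n → Fin n → ℝ) : ℕ := Set.ncard (Set.range M)

/-- SST matrices having an indifference set of size at least `k`. -/
def sstClassK (n k : ℕ) : Set (Fin n → Fin n → ℝ) :=
  {M | M ∈ sstClass n ∧ k ≤ kmaxM M}

/-- SST matrices that respect some indifference-set partition of sizes `k`. -/
def sstClassPart (n s : ℕ) (k : Fin s → ℕ) : Set (Fin n → Fin n → ℝ) :=
  {M | M ∈ sstClass n ∧ ∃ P : Fin s → Finset (Fin n),
    (∀ a b, a ≠ b → Disjoint (P a) (P b)) ∧ (∀ a, (P a).card = k a) ∧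
    (∀ i : Fin n, ∃ a, i ∈ P a) ∧
    ∀ a b : Fin s, ∀ i ∈ P a, ∀ i' ∈ P a, ∀ j ∈ P b, ∀ j' ∈ P b, M i j = M i' j'}

/-- Bernoulli measure on `Bool` with success probability `p`. -/
def bern (p : ℝ) : Measure Bool :=
  (ENNReal.ofReal p) • Measure.dirac true + (ENNReal.ofReal (1 - p)) • Measure.dirac false

/-- The law of the observation matrix `Y`: entries on and above the diagonal independent,
`P[Y i j = 1] = M i j` for `i < j`, `Y j i = 1 - Y i j` off the diagonal, and fair coin
on the diagonal. -/
def obsMeasure {n : ℕ} (M : Fin n → Fin n → ℝ) : Measure (Fin n → Fin n → ℝ) :=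
  Measure.map (fun (ω : Fin n × Fin n → Bool) (i j : Fin n) =>
      if i < j then (if ω (i, j) then (1 : ℝ) else 0)
      else if j < i then 1 - (if ω (j, i) then (1 : ℝ) else 0)
      else (if ω (i, j) then (1 : ℝ) else 0))
    (Measure.pi fun p : Fin n × Fin n => bern (if p.1 = p.2 then 1 / 2 else M p.1 p.2))

/-- The risk `E ‖M̂(Y) − M*‖²_F` of an estimator. -/
def risk {n : ℕ} (Mhat : (Fin n → Fin n → ℝ) → Fin n → Fin n → ℝ)
    (Mstar : Fin n → Fin n → ℝ) : ℝ≥0∞ :=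
  ∫⁻ Y, ENNReal.ofReal (frobSq (Mhat Y - Mstar)) ∂(obsMeasure Mstar)

/-- The `(s, k)`-oracle risk. -/
def oracleRisk (n s : ℕ) (k : Fin s → ℕ) : ℝ≥0∞ :=
  ⨅ (Mhat : (Fin n → Fin n → ℝ) → Fin n → Fin n → ℝ) (_ : Measurable Mhat),
    ⨆ (Mstar : Fin n → Fin n → ℝ) (_ : Mstar ∈ sstClassPart n s k), risk Mhat Mstar

/-- The global adaptivity index of an estimator. -/
def adaptIndex {n : ℕ} (Mhat : (Fin n → Fin n → ℝ) → Fin n → Fin n → ℝ) : ℝ≥0∞ :=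
  ⨆ (s : ℕ) (k : Fin s → ℕ) (_ : ∀ a, 1 ≤ k a) (_ : ∑ a, k a = n) (_ : ∀ a, k a < n),
    (⨆ (Mstar : Fin n → Fin n → ℝ) (_ : Mstar ∈ sstClassPart n s k), risk Mhat Mstar) /
      oracleRisk n s k

/-- Number of wins of item `i`. -/
def winCount {n : ℕ} (Y : Fin n → Fin n → ℝ) (i : Fin n) : ℝ := ∑ j, Y i j

instance {n : ℕ} : MeasurableSpace (Equiv.Perm (Fin n)) := ⊤

/-- Uniform measure on a (finite) set. -/
def unifOn {α : Type*} [Fintype α] [MeasurableSpace α] (s : Set α) : Measure α :=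
  (s.ncard : ℝ≥0∞)⁻¹ • ∑ a ∈ (Set.toFinite s).toFinset, Measure.dirac a

/-- for any binary skew observation matrix `Y`, there exists `M̃ ∈ C_SST`
satisfying both the Pythagorean identity
`‖Y − ½·11ᵀ‖²_F = ‖Y − M̃‖²_F + ‖½·11ᵀ − M̃‖²_F` and `‖M̃ − ½·11ᵀ‖²_F ≥ (n − 1)/4`. -/
theorem exists_bad_sst_matrix {n : ℕ} (hn : 2 ≤ n)
    (Y : Fin n → Fin n → ℝ)
    (hY01 : ∀ i j, Y i j = 0 ∨ Y i j = 1)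
    (hYskew : ∀ i j : Fin n, i ≠ j → Y j i = 1 - Y i j) :
    ∃ Mt ∈ sstClass n,
      frobSq (Y - fun _ _ => (1 : ℝ) / 2) =
        frobSq (Y - Mt) + frobSq ((fun _ _ => (1 : ℝ) / 2) - Mt) ∧
      ((n : ℝ) - 1) / 4 ≤ frobSq (Mt - fun _ _ => (1 : ℝ) / 2) := by
  classical
  have hnpos : 0 < n := by omega
  set w : Fin n → ℝ := fun i => ∑ j, if j = i then 0 else Y i j with hw
  obtain ⟨v, -, hv⟩ := Finset.exists_max_image Finset.univ w ⟨⟨0, hnpos⟩, Finset.mem_univ _⟩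
  have hswap : (∑ i, w i) = ∑ i, ∑ j, (if i = j then (0:ℝ) else Y j i) := by
    simp only [hw]
    rw [Finset.sum_comm]
  have hpair : ∀ i j : Fin n, ((if j = i then (0:ℝ) else Y i j) + (if i = j then 0 else Y j i))
      = if i = j then 0 else 1 := by
    intro i j
    by_cases h : i = j
    · subst h; simp
    · simp only [if_neg h, if_neg (Ne.symm h), hYskew i j h]; ring
  have hrowcount : ∀ i : Fin n, (∑ j, if i = j then (0:ℝ) else 1) = (n:ℝ) - 1 := by
    intro i
    have h1 : (∑ j, if i = j then (0:ℝ) else 1) = ∑ j, (1 - if i = j then (1:ℝ) else 0) := by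
      apply Finset.sum_congr rfl; intro j _; split_ifs <;> ring
    rw [h1, Finset.sum_sub_distrib]
    simp
  have htot : (∑ i, w i) + (∑ i, w i) = (n:ℝ) * ((n:ℝ) - 1) := by
    nth_rewrite 2 [hswap]
    simp only [hw]
    rw [← Finset.sum_add_distrib]
    have h2 : ∀ i : Fin n, ((∑ j, if j = i then (0:ℝ) else Y i j) +
        ∑ j, (if i = j then (0:ℝ) else Y j i)) = (n:ℝ) - 1 := by
      intro i
      rw [← Finset.sum_add_distrib, Finset.sum_congr rfl fun j _ => hpair i j]
      exact hrowcount i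
    rw [Finset.sum_congr rfl fun i _ => h2 i]
    simp [Finset.sum_const, nsmul_eq_mul, mul_comm]
    ring
  have hsumle : (∑ i, w i) ≤ (n:ℝ) * w v := by
    calc (∑ i, w i) ≤ ∑ _i : Fin n, w v :=
          Finset.sum_le_sum fun i _ => hv i (Finset.mem_univ i)
      _ = (n:ℝ) * w v := by simp [Finset.sum_const, nsmul_eq_mul]
  have hwv : ((n:ℝ) - 1) / 2 ≤ w v := by
    have hn' : (0:ℝ) < (n:ℝ) := by exact_mod_cast hnpos
    nlinarith [htot, hsumle]
  set M : Fin n → Fin n → ℝ := fun i j =>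
    if i = v ∧ j ≠ v ∧ Y v j = 1 then 1
    else if j = v ∧ i ≠ v ∧ Y v i = 1 then 0
    else 1/2 with hM
  refine ⟨M, ⟨?_, ?_, ?_⟩, ?_, ?_⟩
  · intro i j; simp only [hM]; split_ifs <;> norm_num
  · intro i j
    simp only [hM]
    split_ifs <;> first
      | (exfalso; tauto)
      | norm_num
  · set f : Fin n → ℕ := fun i => if i = v then 2 else if Y v i = 1 then 0 else 1 with hf
    refine ⟨(Tuple.sort f)⁻¹, ?_⟩
    intro i j k hlt
    have hle : f j ≤ f i := by
      have h := Tuple.monotone_sort f (le_of_lt hlt)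
      simpa using h
    by_cases hiv : i = v
    · subst hiv
      have h2 : 1/2 ≤ M i k := by
        simp only [hM]
        split_ifs with h h'
        · norm_num
        · exact absurd rfl h'.2.1
        · norm_num
      by_cases hjv : j = i
      · subst hjv; exact le_rfl
      · have h1 : M j k ≤ 1/2 := by
          simp only [hM]
          have hc : ¬ (j = i ∧ k ≠ i ∧ Y i k = 1) := fun h => hjv h.1
          rw [if_neg hc]
          split_ifs <;> norm_num
        exact h1.trans h2
    · have hjv : j ≠ v := by
        intro h
        have hf2 : f j = 2 := by simp [hf, h]
        have hf1 : f i ≤ 1 := by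
          simp only [hf, if_neg hiv]; split_ifs <;> omega
        omega
      have hc1 : ¬ (i = v ∧ k ≠ v ∧ Y v k = 1) := fun h => hiv h.1
      have hc2 : ¬ (j = v ∧ k ≠ v ∧ Y v k = 1) := fun h => hjv h.1
      simp only [hM]
      rw [if_neg hc1, if_neg hc2]
      by_cases hkv : k = v
      · by_cases hYi : Y v i = 1
        · have hYj : Y v j = 1 := by
            by_contra hcon
            simp only [hf, if_neg hiv, if_pos hYi, if_neg hjv, if_neg hcon] at hle
            omega
          rw [if_pos ⟨hkv, hjv, hYj⟩, if_pos ⟨hkv, hiv, hYi⟩]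
        · have hii : ¬ (k = v ∧ i ≠ v ∧ Y v i = 1) := fun h => hYi h.2.2
          rw [if_neg hii]
          split_ifs <;> norm_num
      · rw [if_neg (fun h => hkv h.1), if_neg (fun h => hkv h.1)]
  · have hkey : ∀ i j, (Y i j - 1/2)^2 = (Y i j - M i j)^2 + (1/2 - M i j)^2 := by
      intro i j
      simp only [hM]
      split_ifs with h1 h2
      · have hY1 : Y i j = 1 := by rw [h1.1]; exact h1.2.2
        rw [hY1]; norm_num
      · have hY0 : Y i j = 0 := by
          rw [h2.1, hYskew v i (Ne.symm h2.2.1), h2.2.2]; ring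
        rw [hY0]; norm_num
      · ring
    simp only [frobSq, Pi.sub_apply, ← Finset.sum_add_distrib]
    exact Finset.sum_congr rfl fun i _ => Finset.sum_congr rfl fun j _ => hkey i j
  · have hentry : ∀ i j, ((M i j - 1/2)^2 : ℝ) =
        (if i = v then (if j = v then 0 else Y v j / 4) else 0) +
        (if j = v then (if i = v then 0 else Y v i / 4) else 0) := by
      intro i j
      by_cases hiv : i = v <;> by_cases hjv : j = v
      · have h1 : ¬(i = v ∧ j ≠ v ∧ Y v j = 1) := fun h => h.2.1 hjv
        have h2 : ¬(j = v ∧ i ≠ v ∧ Y v i = 1) := fun h => h.2.1 hiv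
        simp only [hM]
        rw [if_neg h1, if_neg h2]
        norm_num [hiv, hjv]
      · rcases hY01 v j with hYj | hYj
        · have h1 : ¬(i = v ∧ j ≠ v ∧ Y v j = 1) := by
            intro h; rw [hYj] at h; exact absurd h.2.2 (by norm_num)
          have h2 : ¬(j = v ∧ i ≠ v ∧ Y v i = 1) := fun h => hjv h.1
          simp only [hM]
          rw [if_neg h1, if_neg h2]
          norm_num [hiv, hjv, hYj]
        · simp only [hM]
          rw [if_pos ⟨hiv, hjv, hYj⟩]
          norm_num [hiv, hjv, hYj]
      · rcases hY01 v i with hYi | hYi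
        · have h1 : ¬(i = v ∧ j ≠ v ∧ Y v j = 1) := fun h => hiv h.1
          have h2 : ¬(j = v ∧ i ≠ v ∧ Y v i = 1) := by
            intro h; rw [hYi] at h; exact absurd h.2.2 (by norm_num)
          simp only [hM]
          rw [if_neg h1, if_neg h2]
          norm_num [hiv, hjv, hYi]
        · have h1 : ¬(i = v ∧ j ≠ v ∧ Y v j = 1) := fun h => hiv h.1
          simp only [hM]
          rw [if_neg h1, if_pos ⟨hjv, hiv, hYi⟩]
          norm_num [hiv, hjv, hYi]
      · have h1 : ¬(i = v ∧ j ≠ v ∧ Y v j = 1) := fun h => hiv h.1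
        have h2 : ¬(j = v ∧ i ≠ v ∧ Y v i = 1) := fun h => hjv h.1
        simp only [hM]
        rw [if_neg h1, if_neg h2]
        norm_num [hiv, hjv]
    have hfrob : frobSq (M - fun _ _ => (1:ℝ)/2) = w v / 2 := by
      simp only [frobSq, Pi.sub_apply]
      rw [Finset.sum_congr rfl fun i _ => Finset.sum_congr rfl fun j _ => hentry i j]
      simp only [Finset.sum_add_distrib]
      have hG : (∑ j, (if j = v then (0:ℝ) else Y v j / 4)) = w v / 4 := by
        simp only [hw]
        rw [Finset.sum_div]
        apply Finset.sum_congr rfl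
        intro j _; split_ifs <;> ring
      have hA : (∑ i, ∑ j, (if i = v then (if j = v then (0:ℝ) else Y v j / 4) else 0))
          = w v / 4 := by
        have hinner : ∀ i : Fin n,
            (∑ j, (if i = v then (if j = v then (0:ℝ) else Y v j / 4) else 0))
            = if i = v then w v / 4 else 0 := by
          intro i
          by_cases hiv : i = v
          · simp only [hiv, if_pos rfl]; exact hG
          · simp [hiv]
        rw [Finset.sum_congr rfl fun i _ => hinner i]
        simp
      have hB : (∑ i, ∑ j, (if j = v then (if i = v then (0:ℝ) else Y v i / 4) else 0))
          = w v / 4 := by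
        have hinner : ∀ i : Fin n,
            (∑ j, (if j = v then (if i = v then (0:ℝ) else Y v i / 4) else 0))
            = if i = v then 0 else Y v i / 4 := by
          intro i
          rw [Finset.sum_ite_eq' Finset.univ v (fun _ => if i = v then (0:ℝ) else Y v i / 4)]
          simp
        rw [Finset.sum_congr rfl fun i _ => hinner i]
        have : (∑ i, (if i = v then (0:ℝ) else Y v i / 4)) = w v / 4 := by
          simp only [hw]
          rw [Finset.sum_div]
          apply Finset.sum_congr rfl
          intro i _; split_ifs <;> ring
        exact this
      rw [hA, hB]
      ring
    rw [hfrob]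
    linarith


end SSTPaper
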